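/- arXiv:2007.04689 — 2 statements merged into one kernel-verified Lean document; each statement's English description precedes it below -/
import Mathlib

section
/- For x ∈ R^4 with x_3 ≠ 0, x_4 ≠ 0, x ≠ 0, the derivative X_1 N(x) = (1/(3N(x)²))·((3/2)‖x‖(2x_1 − sgn(x_3)x_2) − sgn(x_4)x_3) satisfies |X_1 N(x)| ≤ 2‖x‖²/N(x)², where N(x) = (‖x‖³+|x_4|)^{1/3} and ‖x‖ = (x_1²+x_2²+|x_3|)^{1/2}. -/
open Real

/-- The quasi-norm `‖x‖ = (x₁² + x₂² + |x₃|)^{1/2}` on the Engel group. -/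
noncomputable def engelPartNorm (x : ℝ × ℝ × ℝ × ℝ) : ℝ :=
  Real.sqrt (x.1 ^ 2 + x.2.1 ^ 2 + |x.2.2.1|)

/-- The homogeneous norm `N(x) = (‖x‖³ + |x₄|)^{1/3}` on the Engel group. -/
noncomputable def engelN (x : ℝ × ℝ × ℝ × ℝ) : ℝ :=
  (engelPartNorm x ^ 3 + |x.2.2.2|) ^ ((1 : ℝ) / 3)

/-- The explicit expression for `X₁N(x)`, where `X₁ = ∂_{x₁} − x₂∂_{x₃} − x₃∂_{x₄}`. -/
noncomputable def X1engelN (x : ℝ × ℝ × ℝ × ℝ) : ℝ :=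
  (1 / (3 * engelN x ^ 2)) *
    ((3 / 2) * engelPartNorm x * (2 * x.1 - Real.sign x.2.2.1 * x.2.1)
      - Real.sign x.2.2.2 * x.2.2.1)

private lemma abs_ev (b c : ℝ) (hc : c ≠ 0) :
    (fun t : ℝ => |c - b * t|) =ᶠ[nhds (0:ℝ)] fun t => Real.sign c * (c - b * t) := by
  rcases hc.lt_or_gt with h | h
  · have hcont : Filter.Tendsto (fun t : ℝ => c - b * t) (nhds 0) (nhds c) := by
      have : Continuous fun t : ℝ => c - b * t := by continuity
      simpa using this.tendsto 0
    filter_upwards [hcont.eventually_lt_const (by linarith : c < 0)] with t ht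
    rw [Real.sign_of_neg h, abs_of_neg ht]; ring
  · have hcont : Filter.Tendsto (fun t : ℝ => c - b * t) (nhds 0) (nhds c) := by
      have : Continuous fun t : ℝ => c - b * t := by continuity
      simpa using this.tendsto 0
    filter_upwards [hcont.eventually_const_lt (by linarith : (0:ℝ) < c)] with t ht
    rw [Real.sign_of_pos h, abs_of_pos ht]; ring

private lemma sign_abs_le (y : ℝ) : |Real.sign y| ≤ 1 := by
  rcases lt_trichotomy y 0 with h | h | h
  · rw [Real.sign_of_neg h]; norm_num
  · rw [h, Real.sign_zero]; norm_num
  · rw [Real.sign_of_pos h]; norm_num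

private lemma engel_deriv (a b c d : ℝ) (h3 : c ≠ 0) (h4 : d ≠ 0) :
    HasDerivAt (fun t : ℝ =>
      (Real.sqrt ((a + t) ^ 2 + b ^ 2 + |c - b * t|) ^ 3 + |d - c * t|) ^ ((1:ℝ)/3))
      (1/3 * (Real.sqrt (a ^ 2 + b ^ 2 + |c|) ^ 3 + |d|) ^ ((1:ℝ)/3 - 1) *
        (3/2 * Real.sqrt (a ^ 2 + b ^ 2 + |c|) * (2*a - Real.sign c * b) - Real.sign d * c)) 0 := by
  have hs0 : (0:ℝ) < a ^ 2 + b ^ 2 + |c| :=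
    add_pos_of_nonneg_of_pos (by positivity) (abs_pos.mpr h3)
  set A := Real.sqrt (a ^ 2 + b ^ 2 + |c|) with hAdef
  have hA : 0 < A := Real.sqrt_pos.mpr hs0
  have h_lin3 : HasDerivAt (fun t : ℝ => c - b * t) (-b) 0 := by
    have := (hasDerivAt_const (0:ℝ) c).sub ((hasDerivAt_id (0:ℝ)).const_mul b)
    simp at this; exact this
  have h_abs3 : HasDerivAt (fun t : ℝ => |c - b * t|) (Real.sign c * -b) 0 :=
    (h_lin3.const_mul (Real.sign c)).congr_of_eventuallyEq (abs_ev b c h3)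
  have h_lin4 : HasDerivAt (fun t : ℝ => d - c * t) (-c) 0 := by
    have := (hasDerivAt_const (0:ℝ) d).sub ((hasDerivAt_id (0:ℝ)).const_mul c)
    simp at this; exact this
  have h_abs4 : HasDerivAt (fun t : ℝ => |d - c * t|) (Real.sign d * -c) 0 :=
    (h_lin4.const_mul (Real.sign d)).congr_of_eventuallyEq (abs_ev c d h4)
  have hq : HasDerivAt (fun t : ℝ => (a + t) ^ 2) (2 * a) 0 := by
    have := ((hasDerivAt_id (0:ℝ)).const_add a).pow 2
    simp at this; exact this
  have h_s : HasDerivAt (fun t : ℝ => (a + t) ^ 2 + b ^ 2 + |c - b * t|)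
      (2 * a + Real.sign c * -b) 0 := (hq.add_const (b ^ 2)).add h_abs3
  have h0 : ((a + 0) ^ 2 + b ^ 2 + |c - b * 0|) ≠ 0 := by simpa using hs0.ne'
  have h_sqrt := (Real.hasDerivAt_sqrt h0).comp 0 h_s
  have h_cube := h_sqrt.pow 3
  have h_u := h_cube.add h_abs4
  have hval : Real.sqrt ((a + 0) ^ 2 + b ^ 2 + |c - b * 0|) ^ 3 + |d - c * 0| =
      A ^ 3 + |d| := by norm_num [hAdef]
  have hu0 : (0:ℝ) < A ^ 3 + |d| := by positivity
  have hne : Real.sqrt ((a + 0) ^ 2 + b ^ 2 + |c - b * 0|) ^ 3 + |d - c * 0| ≠ 0 := by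
    rw [hval]; exact hu0.ne'
  have hF := (Real.hasDerivAt_rpow_const (p := (1:ℝ)/3) (Or.inl hne)).comp 0 h_u
  refine (hF.congr_deriv ?_).congr_of_eventuallyEq (Filter.Eventually.of_forall fun t => rfl)
  symm
  norm_num [← hAdef]
  field_simp
  exact Or.inl (by ring)

set_option maxHeartbeats 1000000 in
/-- `|X₁N(x)| ≤ 2‖x‖²/N(x)²` for `x₃ ≠ 0`, `x₄ ≠ 0`, `x ≠ 0`. -/
theorem X1_engelN_bound (x : ℝ × ℝ × ℝ × ℝ) (h3 : x.2.2.1 ≠ 0) (h4 : x.2.2.2 ≠ 0)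
    (hx : x ≠ 0) :
    HasDerivAt (fun t : ℝ =>
        engelN (x.1 + t, x.2.1, x.2.2.1 - x.2.1 * t, x.2.2.2 - x.2.2.1 * t))
      (X1engelN x) 0 ∧
    |X1engelN x| ≤ 2 * engelPartNorm x ^ 2 / engelN x ^ 2 := by
  obtain ⟨a, b, c, d⟩ := x
  simp only at h3 h4
  have hs0 : (0:ℝ) < a ^ 2 + b ^ 2 + |c| :=
    add_pos_of_nonneg_of_pos (by positivity) (abs_pos.mpr h3)
  set A := Real.sqrt (a ^ 2 + b ^ 2 + |c|) with hAdef
  have hA : 0 < A := Real.sqrt_pos.mpr hs0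
  have hA2 : A ^ 2 = a ^ 2 + b ^ 2 + |c| := Real.sq_sqrt hs0.le
  have hu0 : (0:ℝ) < A ^ 3 + |d| := by positivity
  have hPN : engelPartNorm (a, b, c, d) = A := rfl
  have hEN : engelN (a, b, c, d) = (A ^ 3 + |d|) ^ ((1:ℝ)/3) := rfl
  set N := (A ^ 3 + |d|) ^ ((1:ℝ)/3) with hNdef
  have hN : 0 < N := Real.rpow_pos_of_pos hu0 _
  have hN2 : N ^ 2 = (A ^ 3 + |d|) ^ ((2:ℝ)/3) := by
    rw [hNdef, ← Real.rpow_natCast ((A ^ 3 + |d|) ^ ((1:ℝ)/3)) 2, ← Real.rpow_mul hu0.le]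
    norm_num
  have hexp : (A ^ 3 + |d|) ^ ((1:ℝ)/3 - 1) = 1 / N ^ 2 := by
    have h13 : (1:ℝ)/3 - 1 = -((2:ℝ)/3) := by norm_num
    rw [h13, Real.rpow_neg hu0.le, hN2, one_div]
  have hXdef : X1engelN (a, b, c, d) =
      1 / (3 * N ^ 2) * (3/2 * A * (2*a - Real.sign c * b) - Real.sign d * c) := rfl
  constructor
  · have hD := engel_deriv a b c d h3 h4
    have heq : (1:ℝ)/3 * (A ^ 3 + |d|) ^ ((1:ℝ)/3 - 1) *
        (3/2 * A * (2*a - Real.sign c * b) - Real.sign d * c) = X1engelN (a, b, c, d) := by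
      rw [hexp, hXdef]; ring
    rw [← heq]
    exact hD
  · have ha' : |a| ≤ A := by
      rw [← Real.sqrt_sq_eq_abs, hAdef]
      exact Real.sqrt_le_sqrt (by nlinarith [abs_nonneg c, sq_nonneg b])
    have hb' : |b| ≤ A := by
      rw [← Real.sqrt_sq_eq_abs, hAdef]
      exact Real.sqrt_le_sqrt (by nlinarith [abs_nonneg c, sq_nonneg a])
    have hc' : |c| ≤ A ^ 2 := by rw [hA2]; nlinarith [sq_nonneg a, sq_nonneg b]
    have hsc := sign_abs_le c
    have hsd := sign_abs_le d
    have h3A : |2 * a - Real.sign c * b| ≤ 3 * A := by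
      have h1 : |2 * a - Real.sign c * b| ≤ |2 * a| + |Real.sign c * b| := abs_sub _ _
      rw [abs_mul, abs_mul] at h1
      have h2a : |(2:ℝ)| = 2 := by norm_num
      rw [h2a] at h1
      nlinarith [abs_nonneg b, abs_nonneg (Real.sign c)]
    have hnum : |3/2 * A * (2*a - Real.sign c * b) - Real.sign d * c| ≤ 6 * A ^ 2 := by
      have h1 : |3/2 * A * (2*a - Real.sign c * b) - Real.sign d * c| ≤
          |3/2 * A * (2*a - Real.sign c * b)| + |Real.sign d * c| := abs_sub _ _
      rw [abs_mul, abs_mul, abs_mul] at h1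
      have h32 : |(3:ℝ)/2| = 3/2 := by norm_num
      rw [h32, abs_of_pos hA] at h1
      nlinarith [abs_nonneg c, abs_nonneg (Real.sign d), abs_nonneg (2*a - Real.sign c * b), hA.le]
    have hNsq : (0:ℝ) < 3 * N ^ 2 := by positivity
    calc |X1engelN (a, b, c, d)|
        = 1 / (3 * N ^ 2) * |3/2 * A * (2*a - Real.sign c * b) - Real.sign d * c| := by
          rw [hXdef, abs_mul, abs_of_pos (by positivity : (0:ℝ) < 1 / (3 * N ^ 2))]
      _ ≤ 1 / (3 * N ^ 2) * (6 * A ^ 2) := by gcongr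
      _ = 2 * A ^ 2 / N ^ 2 := by field_simp; ring
end

section
/- For x ∈ R^4 with x_3 ≠ 0, x_4 ≠ 0, x ≠ 0, the subgradient ∇N(x) = (X_1N(x), X_2N(x)) satisfies |∇N(x)|² = (X_1N(x))² + (X_2N(x))² ≤ 5‖x‖⁴/N(x)⁴, where N(x) = (‖x‖³+|x_4|)^{1/3}, ‖x‖ = (x_1²+x_2²+|x_3|)^{1/2}, X_1 = ∂_{x_1} − x_2∂_{x_3} − x_3∂_{x_4}, X_2 = ∂_{x_2}. -/
open Real

/-- `X₂N(x)`, where `X₂ = ∂_{x₂}`. -/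
noncomputable def X2engelN (x : ℝ × ℝ × ℝ × ℝ) : ℝ :=
  engelPartNorm x * x.2.1 / engelN x ^ 2

/-- The sub-gradient bound `|∇N(x)|² ≤ 5‖x‖⁴/N(x)⁴`. -/
theorem gradN_sq_bound (x : ℝ × ℝ × ℝ × ℝ) (h3 : x.2.2.1 ≠ 0) (h4 : x.2.2.2 ≠ 0)
    (hx : x ≠ 0) :
    X1engelN x ^ 2 + X2engelN x ^ 2 ≤ 5 * engelPartNorm x ^ 4 / engelN x ^ 4 := by
  set r := engelPartNorm x with hrdef
  set N := engelN x with hNdef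
  have hr0 : 0 ≤ r := Real.sqrt_nonneg _
  have harg : 0 ≤ x.1 ^ 2 + x.2.1 ^ 2 + |x.2.2.1| := by positivity
  have hr2 : r ^ 2 = x.1 ^ 2 + x.2.1 ^ 2 + |x.2.2.1| := Real.sq_sqrt harg
  have hc : 0 < |x.2.2.2| := abs_pos.mpr h4
  have hbase : 0 < r ^ 3 + |x.2.2.2| := by positivity
  have hN0 : 0 < N := Real.rpow_pos_of_pos hbase _
  have hN4 : (0:ℝ) < N ^ 4 := by positivity
  -- sign facts
  have hs3 : Real.sign x.2.2.1 ^ 2 = 1 := by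
    rcases lt_or_gt_of_ne h3 with h | h
    · rw [Real.sign_of_neg h]; norm_num
    · rw [Real.sign_of_pos h]; norm_num
  have hs4 : Real.sign x.2.2.2 ^ 2 = 1 := by
    rcases lt_or_gt_of_ne h4 with h | h
    · rw [Real.sign_of_neg h]; norm_num
    · rw [Real.sign_of_pos h]; norm_num
  set s := Real.sign x.2.2.1 with hsdef
  set t := Real.sign x.2.2.2 with htdef
  have habs3 : |x.2.2.1| ^ 2 = x.2.2.1 ^ 2 := sq_abs _
  have hb_le : |x.2.2.1| ≤ r ^ 2 := by nlinarith [sq_nonneg x.1, sq_nonneg x.2.1]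
  have key : ((3 / 2) * r * (2 * x.1 - s * x.2.1) - t * x.2.2.1) ^ 2
      + 9 * (r * x.2.1) ^ 2 ≤ 45 * r ^ 4 := by
    nlinarith [sq_nonneg (x.1 + 2 * s * x.2.1),
      sq_nonneg (r * (2 * x.1 - s * x.2.1) + t * x.2.2.1),
      sq_nonneg (r * (2 * x.1 - s * x.2.1) - t * x.2.2.1),
      sq_nonneg (r * (2 * x.1 - s * x.2.1)), sq_nonneg r, hr0,
      abs_nonneg x.2.2.1, mul_nonneg (abs_nonneg x.2.2.1) hr0,
      mul_nonneg (mul_nonneg hr0 hr0) (abs_nonneg x.2.2.1),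
      sq_nonneg x.2.1, sq_nonneg x.1,
      mul_le_mul_of_nonneg_left hb_le (abs_nonneg x.2.2.1)]
  have e1 : X1engelN x ^ 2 = ((3 / 2) * r * (2 * x.1 - s * x.2.1) - t * x.2.2.1) ^ 2
      / (9 * N ^ 4) := by
    rw [X1engelN, ← hrdef, ← hNdef, ← hsdef, ← htdef, mul_pow, div_pow, one_pow,
      show (3 * N ^ 2) ^ 2 = 9 * N ^ 4 from by ring, one_div, inv_mul_eq_div]
  have e2 : X2engelN x ^ 2 = 9 * (r * x.2.1) ^ 2 / (9 * N ^ 4) := by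
    rw [X2engelN, ← hrdef, ← hNdef, div_pow, show (N ^ 2) ^ 2 = N ^ 4 from by ring,
      ← mul_div_mul_left ((r * x.2.1) ^ 2) (N ^ 4) (by norm_num : (9:ℝ) ≠ 0)]
  have e3 : 5 * r ^ 4 / N ^ 4 = 45 * r ^ 4 / (9 * N ^ 4) := by
    rw [show (45:ℝ) * r ^ 4 = 9 * (5 * r ^ 4) from by ring,
      mul_div_mul_left _ _ (by norm_num : (9:ℝ) ≠ 0)]
  rw [e1, e2, e3, ← add_div]
  exact div_le_div_of_nonneg_right key (by positivity) |>.trans_eq rfl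
end
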